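/- Let (Σ,μ) be a measure space, 0 < p < ∞, and let 𝒦 be the Kalton–Peck map on L_p(μ). For every family u_1,…,u_n of norm-one pairwise disjointly supported functions in L_p(μ) and every choice of signs ε_1,…,ε_n ∈ {−1,1}, one has 𝒦(Σ_{i=1}^n ε_i u_i) − Σ_{i=1}^n ε_i 𝒦(u_i) = −(log n / p)·Σ_{i=1}^n ε_i u_i; in particular ‖𝒦(Σ ε_i u_i) − Σ ε_i 𝒦(u_i)‖_p = p^{−1} n^{1/p} log n, and hence ∇_{[(u_1,…,u_n)]}𝒦 = p^{−1} n^{1/p} log n. -/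

import Mathlib

open MeasureTheory
open scoped ENNReal

noncomputable section

/-- The Kalton–Peck map `𝒦(x) = x · log(|x| / ‖x‖)` on `L_p(μ)`, as a map into `L⁰(μ)`
(with the junk-value conventions `log 0 = 0`, `y/0 = 0`). -/
def KaltonPeck {α : Type*} [MeasurableSpace α] (q : ℝ≥0∞) (μ : Measure α)
    (x : Lp ℝ q μ) : α →ₘ[μ] ℝ :=
  AEEqFun.mk (fun a => x a * Real.log (|x a| / ‖x‖)) <| by
    have h := (Lp.aestronglyMeasurable x).aemeasurable
    exact (h.mul (Real.measurable_log.comp_aemeasurable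
      ((measurable_abs.comp_aemeasurable h).div aemeasurable_const))).aestronglyMeasurable

/-- The average `∇_{[b]}Ω` over all choices of signs of
`‖Ω (∑ ± b_k) - ∑ ± Ω(b_k)‖_p` (computed in `ℝ≥0∞`). -/
def nabla {α : Type*} [MeasurableSpace α] {μ : Measure α} {q : ℝ≥0∞}
    (Ω : Lp ℝ q μ → (α →ₘ[μ] ℝ)) {n : ℕ} (b : Fin n → Lp ℝ q μ) : ℝ≥0∞ :=
  (2 ^ n : ℝ≥0∞)⁻¹ * ∑ ε : Fin n → Bool,
    eLpNorm (⇑(Ω (∑ k, (if ε k then (1:ℝ) else -1) • b k)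
      - ∑ k, (if ε k then (1:ℝ) else -1) • Ω (b k))) q μ

lemma KP.coeFn_finset_sum {α ι : Type*} [MeasurableSpace α] {μ : Measure α}
    (s : Finset ι) (f : ι → (α →ₘ[μ] ℝ)) :
    ⇑(∑ i ∈ s, f i) =ᵐ[μ] fun a => ∑ i ∈ s, f i a := by
  induction s using Finset.cons_induction with
  | empty => exact AEEqFun.coeFn_zero
  | cons i s hi ih =>
    simp only [Finset.sum_cons]
    filter_upwards [AEEqFun.coeFn_add (f i) (∑ j ∈ s, f j), ih] with a h1 h2
    simp [h1, h2]

lemma KP.coeFn_KaltonPeck {α : Type*} [MeasurableSpace α] (q : ℝ≥0∞) (μ : Measure α)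
    (x : Lp ℝ q μ) :
    ⇑(KaltonPeck q μ x) =ᵐ[μ] fun a => x a * Real.log (|x a| / ‖x‖) :=
  AEEqFun.coeFn_mk _ _

lemma KP.ptwise (p : ℝ) (hp : 0 < p) (n : ℕ) (hn : 1 ≤ n)
    (w : Fin n → ℝ) (ε : Fin n → ℝ) (hε : ∀ i, ε i = 1 ∨ ε i = -1)
    (hd : ∀ i j, i ≠ j → w i = 0 ∨ w j = 0) :
    (∑ i, ε i * w i) * Real.log (|∑ i, ε i * w i| / (n : ℝ) ^ (1 / p))
        - ∑ i, ε i * (w i * Real.log (|w i| / 1))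
      = (-(Real.log n / p)) * ∑ i, ε i * w i := by
  by_cases hz : ∀ i, w i = 0
  · simp [hz]
  · push_neg at hz
    obtain ⟨j, hj⟩ := hz
    have hz' : ∀ i, i ≠ j → w i = 0 := fun i hi => (hd i j hi).resolve_right hj
    have hS : ∑ i, ε i * w i = ε j * w j :=
      Finset.sum_eq_single j (fun i _ hi => by rw [hz' i hi, mul_zero]) (by simp)
    have hS2 : ∑ i, ε i * (w i * Real.log (|w i| / 1)) = ε j * (w j * Real.log (|w j| / 1)) :=
      Finset.sum_eq_single j (fun i _ hi => by rw [hz' i hi]; ring) (by simp)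
    rw [hS, hS2, div_one]
    have habs : |ε j * w j| = |w j| := by
      rcases hε j with h | h <;> simp [h, abs_mul]
    have hn0 : (0 : ℝ) < (n : ℝ) := by exact_mod_cast hn
    have hN : (0 : ℝ) < (n : ℝ) ^ (1 / p) := Real.rpow_pos_of_pos hn0 _
    rw [habs, Real.log_div (abs_ne_zero.2 hj) hN.ne', Real.log_rpow hn0]
    ring

lemma KP.main {α : Type*} [MeasurableSpace α] {μ : Measure α}
    (p : ℝ) (hp : 0 < p)
    (n : ℕ) (hn : 1 ≤ n) (u : Fin n → Lp ℝ (ENNReal.ofReal p) μ)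
    (hnorm : ∀ i, ‖u i‖ = 1)
    (hdisj : Pairwise fun i j => ∀ᵐ a ∂μ, u i a = 0 ∨ u j a = 0)
    (ε : Fin n → ℝ) (hε : ∀ i, ε i = 1 ∨ ε i = -1) :
    (KaltonPeck (ENNReal.ofReal p) μ (∑ i, ε i • u i)
        - ∑ i, ε i • KaltonPeck (ENNReal.ofReal p) μ (u i)
      = (-(Real.log n / p)) • ((∑ i, ε i • u i : Lp ℝ (ENNReal.ofReal p) μ) : α →ₘ[μ] ℝ)) ∧
    eLpNorm (⇑(KaltonPeck (ENNReal.ofReal p) μ (∑ i, ε i • u i)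
        - ∑ i, ε i • KaltonPeck (ENNReal.ofReal p) μ (u i))) (ENNReal.ofReal p) μ
      = ENNReal.ofReal (p⁻¹ * (n : ℝ) ^ (1 / p) * Real.log n) := by
  have hq0 : (ENNReal.ofReal p) ≠ 0 := by simp [ENNReal.ofReal_eq_zero, not_le, hp]
  have hqt : (ENNReal.ofReal p) ≠ ⊤ := ENNReal.ofReal_ne_top
  have hqr : (ENNReal.ofReal p).toReal = p := ENNReal.toReal_ofReal hp.le
  set v : Lp ℝ (ENNReal.ofReal p) μ := ∑ i, ε i • u i with hv
  -- a.e. facts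
  have hdisj' : ∀ᵐ a ∂μ, ∀ i j, i ≠ j → (u i a = 0 ∨ u j a = 0) := by
    rw [ae_all_iff]
    intro i
    rw [ae_all_iff]
    intro j
    by_cases h : i = j
    · exact Filter.Eventually.of_forall fun a hij => absurd h hij
    · exact (hdisj h).mono fun a ha _ => ha
  have h1 : ∀ᵐ a ∂μ, ∀ i, (ε i • u i) a = ε i * u i a := by
    rw [ae_all_iff]
    intro i
    filter_upwards [Lp.coeFn_smul (ε i) (u i)] with a ha
    simpa using ha
  have hvcast : (v : α →ₘ[μ] ℝ) = ∑ i, ((ε i • u i : Lp ℝ (ENNReal.ofReal p) μ) : α →ₘ[μ] ℝ) := by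
    rw [hv]
    exact map_sum (AddSubgroupClass.subtype (Lp ℝ (ENNReal.ofReal p) μ)) _ _
  have hsum : ⇑v =ᵐ[μ] fun a => ∑ i, ε i * u i a := by
    have h2 : ⇑v =ᵐ[μ] fun a => ∑ i, (ε i • u i) a := by
      have : ⇑v = ⇑(v : α →ₘ[μ] ℝ) := rfl
      rw [this, hvcast]
      exact KP.coeFn_finset_sum _ _
    filter_upwards [h2, h1] with a h2a h1a
    rw [h2a]
    exact Finset.sum_congr rfl fun i _ => h1a i
  -- norm of v
  have hint : ∀ i, ∫⁻ a, (‖u i a‖₊ : ℝ≥0∞) ^ p ∂μ = 1 := by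
    intro i
    have hsn : eLpNorm (u i) (ENNReal.ofReal p) μ = 1 := by
      rw [← ENNReal.ofReal_one, ← hnorm i, Lp.norm_def,
        ENNReal.ofReal_toReal (Lp.eLpNorm_ne_top _)]
    rw [eLpNorm_eq_lintegral_rpow_enorm_toReal hq0 hqt, hqr] at hsn
    have := congrArg (· ^ p) hsn
    simpa [← ENNReal.rpow_mul, one_div, inv_mul_cancel₀ hp.ne', enorm_eq_nnnorm] using this
  have hkey : ∫⁻ a, (‖v a‖₊ : ℝ≥0∞) ^ p ∂μ = n := by
    have hae : (fun a => (‖v a‖₊ : ℝ≥0∞) ^ p) =ᵐ[μ]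
        fun a => ∑ i, (‖u i a‖₊ : ℝ≥0∞) ^ p := by
      filter_upwards [hsum, hdisj'] with a hsa hda
      rw [hsa]
      by_cases hz : ∀ i, u i a = 0
      · simp [hz, ENNReal.zero_rpow_of_pos hp]
      · push_neg at hz
        obtain ⟨j, hj⟩ := hz
        have hz' : ∀ i, i ≠ j → u i a = 0 := fun i hi => (hda i j hi).resolve_right hj
        have hS : ∑ i, ε i * u i a = ε j * u j a :=
          Finset.sum_eq_single j (fun i _ hi => by rw [hz' i hi, mul_zero]) (by simp)
        have hRHS : ∑ i, (‖u i a‖₊ : ℝ≥0∞) ^ p = (‖u j a‖₊ : ℝ≥0∞) ^ p :=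
          Finset.sum_eq_single j
            (fun i _ hi => by rw [hz' i hi]; simp [ENNReal.zero_rpow_of_pos hp])
            (by simp)
        have hjn : ‖ε j * u j a‖₊ = ‖u j a‖₊ := by
          rcases hε j with h | h <;> simp [h, nnnorm_mul]
        rw [hS, hRHS, hjn]
    rw [lintegral_congr_ae hae,
      lintegral_finset_sum' (f := fun i a => (‖u i a‖₊ : ℝ≥0∞) ^ p) _ fun i _ =>
        ((Lp.aestronglyMeasurable (u i)).enorm.pow_const p)]
    simp [hint]
  have heL : eLpNorm (⇑v) (ENNReal.ofReal p) μ = (n : ℝ≥0∞) ^ (1 / p) := by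
    rw [eLpNorm_eq_lintegral_rpow_enorm_toReal hq0 hqt, hqr]
    simp only [enorm_eq_nnnorm]
    rw [hkey]
  have hvnorm : ‖v‖ = (n : ℝ) ^ (1 / p) := by
    rw [Lp.norm_def, heL, ← ENNReal.toReal_rpow]
    simp
  -- the identity
  have hid : KaltonPeck (ENNReal.ofReal p) μ v - ∑ i, ε i • KaltonPeck (ENNReal.ofReal p) μ (u i)
      = (-(Real.log n / p)) • ((v : Lp ℝ (ENNReal.ofReal p) μ) : α →ₘ[μ] ℝ) := by
    apply AEEqFun.ext
    have hKPs : ∀ᵐ a ∂μ, ∀ i, (ε i • KaltonPeck (ENNReal.ofReal p) μ (u i)) a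
        = ε i * (u i a * Real.log (|u i a| / 1)) := by
      rw [ae_all_iff]
      intro i
      filter_upwards [AEEqFun.coeFn_smul (ε i) (KaltonPeck (ENNReal.ofReal p) μ (u i)),
        KP.coeFn_KaltonPeck (ENNReal.ofReal p) μ (u i)] with a ha hb
      rw [ha]
      simp only [Pi.smul_apply, smul_eq_mul, hb, hnorm i]
    filter_upwards [AEEqFun.coeFn_sub (KaltonPeck (ENNReal.ofReal p) μ v) (∑ i, ε i • KaltonPeck (ENNReal.ofReal p) μ (u i)),
      KP.coeFn_KaltonPeck (ENNReal.ofReal p) μ v,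
      KP.coeFn_finset_sum Finset.univ (fun i => ε i • KaltonPeck (ENNReal.ofReal p) μ (u i)),
      hKPs, hsum, hdisj',
      AEEqFun.coeFn_smul (-(Real.log n / p)) ((v : Lp ℝ (ENNReal.ofReal p) μ) : α →ₘ[μ] ℝ)]
      with a hsub hKPv hs hKPsa hsa hda hsm
    rw [hsub]
    simp only [Pi.sub_apply]
    rw [hKPv, hs, hsm]
    simp only [Pi.smul_apply, smul_eq_mul]
    have hva : ((v : α →ₘ[μ] ℝ) : α → ℝ) a = v a := rfl
    rw [hva, hsa, hvnorm]
    calc (∑ i, ε i * u i a) * Real.log (|∑ i, ε i * u i a| / (n : ℝ) ^ (1 / p))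
          - ∑ i, (ε i • KaltonPeck (ENNReal.ofReal p) μ (u i)) a
        = (∑ i, ε i * u i a) * Real.log (|∑ i, ε i * u i a| / (n : ℝ) ^ (1 / p))
          - ∑ i, ε i * (u i a * Real.log (|u i a| / 1)) := by
          congr 1
          exact Finset.sum_congr rfl fun i _ => hKPsa i
      _ = (-(Real.log n / p)) * ∑ i, ε i * u i a :=
          KP.ptwise p hp n hn (fun i => u i a) ε hε (fun i j hij => hda i j hij)
  refine ⟨hid, ?_⟩
  -- norm computation
  rw [hid]
  have hsm := AEEqFun.coeFn_smul (-(Real.log n / p)) ((v : Lp ℝ (ENNReal.ofReal p) μ) : α →ₘ[μ] ℝ)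
  rw [eLpNorm_congr_ae hsm]
  have : ⇑((v : Lp ℝ (ENNReal.ofReal p) μ) : α →ₘ[μ] ℝ) = ⇑v := rfl
  rw [this, eLpNorm_const_smul, heL]
  have hlog : 0 ≤ Real.log n := Real.log_natCast_nonneg n
  have hc : ((‖-(Real.log (n:ℝ) / p)‖₊ : ℝ≥0∞)) = ENNReal.ofReal (Real.log n / p) := by
    rw [← enorm_eq_nnnorm, ← ofReal_norm]
    congr 1
    rw [norm_neg, Real.norm_eq_abs, abs_of_nonneg (div_nonneg hlog hp.le)]
  have hnn : ((n : ℝ≥0∞)) ^ (1 / p) = ENNReal.ofReal ((n : ℝ) ^ (1 / p)) := by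
    rw [← ENNReal.ofReal_natCast,
      ENNReal.ofReal_rpow_of_nonneg (Nat.cast_nonneg n) (by positivity)]
  rw [enorm_eq_nnnorm, hc, hnn, ← ENNReal.ofReal_mul (div_nonneg hlog hp.le)]
  congr 1
  ring

/-- For `n` normalized disjointly supported functions `u_i` in `L_p(μ)`,
`0 < p < ∞`, and signs `ε_i = ±1`, the Kalton–Peck map satisfies the exact identity
`𝒦(∑ ε_i u_i) - ∑ ε_i 𝒦(u_i) = -(log n / p) ∑ ε_i u_i`, so that the `L_p`-norm of this
difference equals `p⁻¹ n^{1/p} log n`, and `∇_{[(u_i)]}𝒦 = p⁻¹ n^{1/p} log n`. -/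
theorem kaltonPeck_signs_identity
    {α : Type*} [MeasurableSpace α] {μ : Measure α}
    (p : ℝ) (hp : 0 < p)
    (n : ℕ) (hn : 1 ≤ n) (u : Fin n → Lp ℝ (ENNReal.ofReal p) μ)
    (hnorm : ∀ i, ‖u i‖ = 1)
    (hdisj : Pairwise fun i j => ∀ᵐ a ∂μ, u i a = 0 ∨ u j a = 0)
    (ε : Fin n → ℝ) (hε : ∀ i, ε i = 1 ∨ ε i = -1) :
    (KaltonPeck (ENNReal.ofReal p) μ (∑ i, ε i • u i)
        - ∑ i, ε i • KaltonPeck (ENNReal.ofReal p) μ (u i)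
      = (-(Real.log n / p)) • ((∑ i, ε i • u i : Lp ℝ (ENNReal.ofReal p) μ) : α →ₘ[μ] ℝ)) ∧
    eLpNorm (⇑(KaltonPeck (ENNReal.ofReal p) μ (∑ i, ε i • u i)
        - ∑ i, ε i • KaltonPeck (ENNReal.ofReal p) μ (u i))) (ENNReal.ofReal p) μ
      = ENNReal.ofReal (p⁻¹ * (n : ℝ) ^ (1 / p) * Real.log n) ∧
    nabla (KaltonPeck (ENNReal.ofReal p) μ) u
      = ENNReal.ofReal (p⁻¹ * (n : ℝ) ^ (1 / p) * Real.log n) := by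
  obtain ⟨h1, h2⟩ := KP.main p hp n hn u hnorm hdisj ε hε
  refine ⟨h1, h2, ?_⟩
  have hterm : ∀ ε' : Fin n → Bool,
      eLpNorm (⇑(KaltonPeck (ENNReal.ofReal p) μ
          (∑ k, (if ε' k then (1:ℝ) else -1) • u k)
        - ∑ k, (if ε' k then (1:ℝ) else -1) • KaltonPeck (ENNReal.ofReal p) μ (u k)))
        (ENNReal.ofReal p) μ
      = ENNReal.ofReal (p⁻¹ * (n : ℝ) ^ (1 / p) * Real.log n) := fun ε' =>
    (KP.main p hp n hn u hnorm hdisj (fun k => if ε' k then (1:ℝ) else -1)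
      (fun k => by by_cases h : ε' k <;> simp [h])).2
  rw [nabla]
  rw [Finset.sum_congr rfl fun ε' _ => hterm ε', Finset.sum_const, nsmul_eq_mul]
  rw [Finset.card_univ]
  have hcard : (Fintype.card (Fin n → Bool) : ℝ≥0∞) = 2 ^ n := by
    simp [Fintype.card_fun]
  rw [hcard, ← mul_assoc, ENNReal.inv_mul_cancel (pow_ne_zero n two_ne_zero) (ENNReal.pow_ne_top ENNReal.ofNat_ne_top), one_mul]
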